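/- arXiv:1901.03734 — 2 statements merged into one kernel-verified Lean document; each statement's English description precedes it below -/
import Mathlib

section
/- For each natural number p, the almost Riordan array A_r^p = (1 + prx/(1-px); 1/(1-px)^2, x/(1-px)) is a pseudo-involution: the first-column correction a* of its inverse equals 1 - prx/(1+px). -/
open PowerSeries

/-- Composition f ∘ g of formal power series (intended for g with zero constant term). -/
noncomputable def comp (f g : ℚ⟦X⟧) : ℚ⟦X⟧ :=
  PowerSeries.mk fun n => ∑ k ∈ Finset.range (n + 1),
    PowerSeries.coeff k f * PowerSeries.coeff n (g ^ k)

/-- (f(x) - f(0))/x. -/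
noncomputable def shift (f : ℚ⟦X⟧) : ℚ⟦X⟧ := PowerSeries.mk fun n => PowerSeries.coeff (n + 1) f

/-- Action of the almost Riordan array (a; g, f) on a power series b. -/
noncomputable def aact (a g f b : ℚ⟦X⟧) : ℚ⟦X⟧ :=
  PowerSeries.C (PowerSeries.constantCoeff b) * a + PowerSeries.X * g * comp (shift b) f

/-- Product in the group of almost Riordan arrays of order 1 (triples (a; g, f)). -/
noncomputable def amul (M N : ℚ⟦X⟧ × ℚ⟦X⟧ × ℚ⟦X⟧) : ℚ⟦X⟧ × ℚ⟦X⟧ × ℚ⟦X⟧ :=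
  (aact M.1 M.2.1 M.2.2 N.1, M.2.1 * comp N.2.1 M.2.2, comp N.2.2 M.2.2)

/-- Product in the Riordan group (pairs (g, f)). -/
noncomputable def rmul (M N : ℚ⟦X⟧ × ℚ⟦X⟧) : ℚ⟦X⟧ × ℚ⟦X⟧ :=
  (M.1 * comp N.1 M.2, comp N.2 M.2)

lemma coeff_pow_eq_zero {f : ℚ⟦X⟧} (hf : constantCoeff f = 0) {n k : ℕ} (h : n < k) :
    PowerSeries.coeff n (f ^ k) = 0 := by
  obtain ⟨g, rfl⟩ := PowerSeries.X_dvd_iff.mpr hf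
  rw [mul_pow, PowerSeries.coeff_X_pow_mul', if_neg (by omega)]

lemma comp_one (f : ℚ⟦X⟧) : comp 1 f = 1 := by
  ext n
  simp [comp, PowerSeries.coeff_one, Finset.sum_ite_eq']

lemma comp_C_mul (q : ℚ) (h f : ℚ⟦X⟧) :
    comp (PowerSeries.C q * h) f = PowerSeries.C q * comp h f := by
  ext n
  simp [comp, Finset.mul_sum, mul_assoc]

lemma comp_sub (h g f : ℚ⟦X⟧) : comp (h - g) f = comp h f - comp g f := by
  ext n
  simp [comp, sub_mul, Finset.sum_sub_distrib]

lemma coeff_mul_comp {f : ℚ⟦X⟧} (hf : constantCoeff f = 0) (h : ℚ⟦X⟧) (n : ℕ) :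
    PowerSeries.coeff n (f * comp h f) =
      ∑ j ∈ Finset.range (n + 1),
        PowerSeries.coeff j h * PowerSeries.coeff n (f ^ (j + 1)) := by
  rw [PowerSeries.coeff_mul]
  have step1 : ∀ ab ∈ Finset.HasAntidiagonal.antidiagonal n,
      PowerSeries.coeff ab.1 f * PowerSeries.coeff ab.2 (comp h f)
        = ∑ j ∈ Finset.range (n + 1),
            PowerSeries.coeff j h *
              (PowerSeries.coeff ab.1 f * PowerSeries.coeff ab.2 (f ^ j)) := by
    intro ab hab
    have hb : ab.2 ≤ n := Finset.HasAntidiagonal.antidiagonal.snd_le hab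
    rw [comp, PowerSeries.coeff_mk,
      Finset.sum_subset (Finset.range_subset_range.mpr (by omega) :
        Finset.range (ab.2 + 1) ⊆ Finset.range (n + 1))
        (fun j hj hj' => by
          rw [coeff_pow_eq_zero hf (by simp at hj hj'; omega), mul_zero]),
      Finset.mul_sum]
    exact Finset.sum_congr rfl fun j _ => by ring
  rw [Finset.sum_congr rfl step1, Finset.sum_comm]
  refine Finset.sum_congr rfl fun j _ => ?_
  rw [← Finset.mul_sum, pow_succ', PowerSeries.coeff_mul]

lemma comp_X_mul {f : ℚ⟦X⟧} (hf : constantCoeff f = 0) (h : ℚ⟦X⟧) :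
    comp (X * h) f = f * comp h f := by
  ext n
  rw [coeff_mul_comp hf, comp, PowerSeries.coeff_mk, Finset.sum_range_succ',
    Finset.sum_range_succ]
  simp [PowerSeries.coeff_succ_X_mul, coeff_pow_eq_zero hf (Nat.lt_succ_self n)]

/-- A_r^p = (1 + prx/(1-px); 1/(1-px)^2, x/(1-px)) is a pseudo-involution: the first-column
correction a* = (1; -1/(g∘f̄), f̄)·a of its inverse equals 1 - prx/(1+px), where f̄ = x/(1+px). -/
theorem Ar_pow_pseudo_involution (r : ℚ) (p : ℕ) :
    aact 1
        (-(comp ((1 - PowerSeries.C (p : ℚ) * X : ℚ⟦X⟧)⁻¹ ^ 2)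
            (X * (1 + PowerSeries.C (p : ℚ) * X)⁻¹))⁻¹)
        (X * (1 + PowerSeries.C (p : ℚ) * X)⁻¹)
        (1 + PowerSeries.C ((p : ℚ) * r) * X * (1 - PowerSeries.C (p : ℚ) * X)⁻¹)
      = 1 - PowerSeries.C ((p : ℚ) * r) * X * (1 + PowerSeries.C (p : ℚ) * X)⁻¹ := by
  set c : ℚ := (p : ℚ) with hc
  set w : ℚ⟦X⟧ := 1 + PowerSeries.C c * X with hwdef
  set d : ℚ⟦X⟧ := 1 - PowerSeries.C c * X with hddef
  set u : ℚ⟦X⟧ := d⁻¹ with hudef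
  set f : ℚ⟦X⟧ := X * w⁻¹ with hfdef
  have hw0 : constantCoeff w ≠ 0 := by simp [hwdef]
  have hd0 : constantCoeff d ≠ 0 := by simp [hddef]
  have hwv : w * w⁻¹ = 1 := PowerSeries.mul_inv_cancel _ hw0
  have hdu : d * u = 1 := PowerSeries.mul_inv_cancel _ hd0
  have hf0 : constantCoeff f = 0 := by simp [hfdef]
  -- 1 - c f = w⁻¹
  have K1 : (1 : ℚ⟦X⟧) - PowerSeries.C c * f = w⁻¹ := by
    have h1 : w - PowerSeries.C c * X = 1 := by rw [hwdef]; ring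
    calc (1 : ℚ⟦X⟧) - PowerSeries.C c * f
        = w * w⁻¹ - PowerSeries.C c * (X * w⁻¹) := by rw [hwv, hfdef]
      _ = (w - PowerSeries.C c * X) * w⁻¹ := by ring
      _ = w⁻¹ := by rw [h1, one_mul]
  -- mini-lemma: comp (h * d) f = comp h f * w⁻¹
  have M : ∀ h : ℚ⟦X⟧, comp (h * d) f = comp h f * w⁻¹ := by
    intro h
    have : h * d = h - PowerSeries.C c * (X * h) := by rw [hddef]; ring
    rw [this, comp_sub, comp_C_mul, comp_X_mul hf0, ← K1]
    ring
  -- comp u f = w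
  have hcu : comp u f = w := by
    have h1 : comp u f * w⁻¹ = 1 := by
      rw [← M u]
      have : u * d = 1 := by rw [mul_comm]; exact hdu
      rw [this, comp_one]
    calc comp u f = comp u f * (w⁻¹ * w) := by rw [mul_comm w⁻¹ w, hwv, mul_one]
      _ = (comp u f * w⁻¹) * w := by ring
      _ = w := by rw [h1, one_mul]
  -- comp (u^2) f = w^2 via W * w⁻¹ * w⁻¹ = 1
  set W : ℚ⟦X⟧ := comp (u ^ 2) f with hWdef
  have hW1 : W * w⁻¹ * w⁻¹ = 1 := by
    have e1 : u ^ 2 * d * d = 1 := by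
      have : u ^ 2 * d * d = (d * u) ^ 2 := by ring
      rw [this, hdu, one_pow]
    have s1 := M (u ^ 2)
    have s2 := M (u ^ 2 * d)
    calc W * w⁻¹ * w⁻¹ = comp (u ^ 2 * d) f * w⁻¹ := by rw [hWdef, s1]
      _ = comp (u ^ 2 * d * d) f := s2.symm
      _ = 1 := by rw [e1, comp_one]
  have hWc : constantCoeff W ≠ 0 := by
    intro h0
    have := congrArg (constantCoeff) hW1
    simp [map_mul, h0] at this
  have hWW : W * W⁻¹ = 1 := PowerSeries.mul_inv_cancel _ hWc
  have hWinv : W⁻¹ = w⁻¹ * w⁻¹ := by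
    calc W⁻¹ = (W * w⁻¹ * w⁻¹) * W⁻¹ := by rw [hW1, one_mul]
      _ = (W * W⁻¹) * (w⁻¹ * w⁻¹) := by ring
      _ = w⁻¹ * w⁻¹ := by rw [hWW, one_mul]
  -- shift a = C (c*r) * u
  have hshift : shift (1 + PowerSeries.C (c * r) * X * u) = PowerSeries.C (c * r) * u := by
    ext n
    simp [shift, mul_assoc, PowerSeries.coeff_succ_X_mul, PowerSeries.coeff_one]
  have hconst : constantCoeff (1 + PowerSeries.C (c * r) * X * u) = 1 := by
    simp [mul_assoc]
  -- assemble
  rw [show ((p : ℚ) * r) = c * r from rfl]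
  rw [aact, hconst, hshift, comp_C_mul, hcu, map_one, one_mul, hWinv]
  have hvw : w⁻¹ * w = 1 := by rw [mul_comm]; exact hwv
  calc 1 + X * -(w⁻¹ * w⁻¹) * (PowerSeries.C (c * r) * w)
      = 1 - PowerSeries.C (c * r) * X * w⁻¹ * (w⁻¹ * w) := by ring
    _ = 1 - PowerSeries.C (c * r) * X * w⁻¹ := by rw [hvw, mul_one]
end

section
/- The Riordan array (1/(1-4x^2)^{3/2}, x/√(1-4x^2)) is a quasi-involution: its inverse equals (1/(1+4x^2)^{3/2}, x/√(1+4x^2)). Equivalently, the compositional inverse of x/√(1-4x^2) is x/√(1+4x^2). -/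
open PowerSeries

namespace QI

open Polynomial Finset


lemma coeff_pow_zero {g : ℚ⟦X⟧} (hg : PowerSeries.constantCoeff g = 0)
    {n k : ℕ} (h : n < k) : PowerSeries.coeff n (g ^ k) = 0 := by
  have hX : (PowerSeries.X : ℚ⟦X⟧) ∣ g := PowerSeries.X_dvd_iff.mpr hg
  have : (PowerSeries.X : ℚ⟦X⟧) ^ k ∣ g ^ k := pow_dvd_pow_of_dvd hX k
  exact PowerSeries.X_pow_dvd_iff.mp this n h

lemma coeff_eval₂_zero {g : ℚ⟦X⟧} (hg : PowerSeries.constantCoeff g = 0)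
    {P : ℚ[X]} {n N : ℕ} (hn : n < N) (hP : ∀ d < N, P.coeff d = 0) :
    PowerSeries.coeff n (P.eval₂ (PowerSeries.C) g) = 0 := by
  obtain ⟨q, rfl⟩ := Polynomial.X_pow_dvd_iff.mpr hP
  rw [Polynomial.eval₂_mul, Polynomial.eval₂_X_pow]
  have hX : (PowerSeries.X : ℚ⟦X⟧) ∣ g := PowerSeries.X_dvd_iff.mpr hg
  have : (PowerSeries.X : ℚ⟦X⟧) ^ N ∣ g ^ N * q.eval₂ (PowerSeries.C) g :=
    Dvd.dvd.mul_right (pow_dvd_pow_of_dvd hX N) _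
  exact PowerSeries.X_pow_dvd_iff.mp this n hn

lemma coeff_comp {f g : ℚ⟦X⟧} (hg : PowerSeries.constantCoeff g = 0)
    {n N : ℕ} (hn : n < N) :
    PowerSeries.coeff n (comp f g) =
      PowerSeries.coeff n ((PowerSeries.trunc N f).eval₂ (PowerSeries.C) g) := by
  rw [PowerSeries.eval₂_trunc_eq_sum_range, map_sum]
  unfold _root_.comp
  rw [PowerSeries.coeff_mk]
  simp only [PowerSeries.coeff_C_mul]
  refine Finset.sum_subset (Finset.range_subset_range.mpr hn) ?_
  intro k _ hk
  rw [Finset.mem_range, not_lt] at hk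
  rw [coeff_pow_zero hg (lt_of_lt_of_le (Nat.lt_of_succ_le hk) le_rfl), mul_zero]

lemma comp_mul {f₁ f₂ g : ℚ⟦X⟧} (hg : PowerSeries.constantCoeff g = 0) :
    comp (f₁ * f₂) g = comp f₁ g * comp f₂ g := by
  ext n
  set N := n + 1 with hN
  have hn : n < N := Nat.lt_succ_self n
  set P₁ := PowerSeries.trunc N f₁
  set P₂ := PowerSeries.trunc N f₂
  have h1 : PowerSeries.coeff n (comp f₁ g * comp f₂ g)
      = PowerSeries.coeff n ((P₁.eval₂ (PowerSeries.C) g) * (P₂.eval₂ (PowerSeries.C) g)) := by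
    rw [PowerSeries.coeff_mul, PowerSeries.coeff_mul]
    refine Finset.sum_congr rfl ?_
    intro p hp
    rw [Finset.HasAntidiagonal.mem_antidiagonal] at hp
    have hp1 : p.1 < N := Nat.lt_succ_of_le (hp ▸ Nat.le_add_right p.1 p.2)
    have hp2 : p.2 < N := Nat.lt_succ_of_le (hp ▸ Nat.le_add_left p.2 p.1)
    rw [coeff_comp hg hp1, coeff_comp hg hp2]
  rw [h1, ← Polynomial.eval₂_mul, coeff_comp hg hn]
  have key : ∀ d < N, (P₁ * P₂ - (PowerSeries.trunc N (f₁ * f₂))).coeff d = 0 := by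
    intro d hd
    rw [Polynomial.coeff_sub, sub_eq_zero]
    have h2 := PowerSeries.coeff_mul_eq_coeff_trunc_mul_trunc f₁ f₂ hd
    rw [← Polynomial.coeff_coe, ← Polynomial.coeff_coe, Polynomial.coe_mul, ← h2,
      PowerSeries.coeff_coe_trunc_of_lt hd]
  have : P₁ * P₂ = PowerSeries.trunc N (f₁ * f₂) + (P₁ * P₂ - PowerSeries.trunc N (f₁ * f₂)) := by
    ring
  rw [this, Polynomial.eval₂_add, map_add, coeff_eval₂_zero hg hn key, add_zero]

lemma comp_one {g : ℚ⟦X⟧} : comp 1 g = 1 := by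
  ext n
  unfold _root_.comp
  rw [PowerSeries.coeff_mk]
  rw [Finset.sum_eq_single 0]
  · simp
  · intro k _ hk; simp [PowerSeries.coeff_one, hk]
  · intro h; exact absurd (Finset.mem_range.mpr (Nat.succ_pos n)) h

lemma comp_C {g : ℚ⟦X⟧} (a : ℚ) : comp (PowerSeries.C a) g = PowerSeries.C a := by
  ext n
  unfold _root_.comp
  rw [PowerSeries.coeff_mk]
  rw [Finset.sum_eq_single 0]
  · simp [PowerSeries.coeff_C]
  · intro k _ hk; simp [PowerSeries.coeff_C, hk]
  · intro h; exact absurd (Finset.mem_range.mpr (Nat.succ_pos n)) h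

lemma comp_add {f₁ f₂ g : ℚ⟦X⟧} : comp (f₁ + f₂) g = comp f₁ g + comp f₂ g := by
  ext n
  unfold _root_.comp
  simp [add_mul, Finset.sum_add_distrib]

lemma comp_X {g : ℚ⟦X⟧} (hg : PowerSeries.constantCoeff g = 0) : comp X g = g := by
  ext n
  unfold _root_.comp
  rw [PowerSeries.coeff_mk]
  rcases Nat.eq_zero_or_pos n with h | h
  · subst h
    simp [PowerSeries.coeff_X, hg]
  · rw [Finset.sum_eq_single 1]
    · simp
    · intro k _ hk
      simp [PowerSeries.coeff_X, hk]
    · intro h1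
      rw [Finset.mem_range, not_lt] at h1
      omega

lemma comp_pow {f g : ℚ⟦X⟧} (hg : PowerSeries.constantCoeff g = 0) (k : ℕ) :
    comp (f ^ k) g = (comp f g) ^ k := by
  induction k with
  | zero => simpa using comp_one
  | succ k ih => rw [pow_succ, pow_succ, comp_mul hg, ih]

lemma constantCoeff_comp {f g : ℚ⟦X⟧} :
    PowerSeries.constantCoeff (comp f g) = PowerSeries.constantCoeff f := by
  rw [← PowerSeries.coeff_zero_eq_constantCoeff_apply, ← PowerSeries.coeff_zero_eq_constantCoeff_apply]
  unfold _root_.comp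
  rw [PowerSeries.coeff_mk]
  simp

lemma sq_eq {a b : ℚ⟦X⟧} (h : a ^ 2 = b ^ 2) (ha : PowerSeries.constantCoeff a = 1)
    (hb : PowerSeries.constantCoeff b = 1) : a = b := by
  have h0 : (a - b) * (a + b) = 0 := by linear_combination h
  rcases mul_eq_zero.mp h0 with h1 | h1
  · exact sub_eq_zero.mp h1
  · exfalso
    have := congrArg (PowerSeries.constantCoeff) h1
    rw [map_add, ha, hb, map_zero] at this
    norm_num at this

lemma key (r : ℚ) (a b : ℚ⟦X⟧) (ha0 : PowerSeries.constantCoeff a = 1)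
    (hb0 : PowerSeries.constantCoeff b = 1)
    (ha : a ^ 2 = 1 - PowerSeries.C r * PowerSeries.X ^ 2)
    (hb : b ^ 2 = 1 + PowerSeries.C r * PowerSeries.X ^ 2) :
    comp a (PowerSeries.X * b⁻¹) = b⁻¹ := by
  set g : ℚ⟦X⟧ := PowerSeries.X * b⁻¹ with hgdef
  have hbne : PowerSeries.constantCoeff b ≠ 0 := by rw [hb0]; norm_num
  have hbu : b * b⁻¹ = 1 := PowerSeries.mul_inv_cancel b hbne
  have hg : PowerSeries.constantCoeff g = 0 := by
    rw [hgdef, map_mul, PowerSeries.constantCoeff_X, zero_mul]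
  have hbzero : b ≠ 0 := fun h => hbne (by rw [h, map_zero])
  have hb2ne : b ^ 2 ≠ 0 := pow_ne_zero 2 hbzero
  have hbu2 : b ^ 2 * (b⁻¹) ^ 2 = 1 := by rw [← mul_pow, hbu, one_pow]
  have hsq : (comp a g) ^ 2 = (b⁻¹) ^ 2 := by
    rw [← comp_pow hg 2, ha]
    have h2 : (1 - PowerSeries.C r * PowerSeries.X ^ 2 : ℚ⟦X⟧)
        = 1 + PowerSeries.C (-r) * PowerSeries.X ^ 2 := by rw [map_neg]; ring
    rw [h2, comp_add, comp_one, comp_mul hg, comp_C, comp_pow hg, comp_X hg]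
    apply mul_left_cancel₀ hb2ne
    rw [hbu2]
    have hgg : g ^ 2 = PowerSeries.X ^ 2 * (b⁻¹) ^ 2 := by rw [hgdef, mul_pow]
    calc b ^ 2 * (1 + PowerSeries.C (-r) * g ^ 2)
        = b ^ 2 - PowerSeries.C r * PowerSeries.X ^ 2 * (b ^ 2 * (b⁻¹) ^ 2) := by
          rw [hgg, map_neg]; ring
      _ = b ^ 2 - PowerSeries.C r * PowerSeries.X ^ 2 := by rw [hbu2, mul_one]
      _ = 1 := by rw [hb]; ring
  have hcc : PowerSeries.constantCoeff (comp a g) = 1 := constantCoeff_comp.trans ha0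
  have hccb : PowerSeries.constantCoeff (b⁻¹) = 1 := by
    rw [PowerSeries.constantCoeff_inv, hb0]; norm_num
  exact sq_eq hsq hcc hccb

lemma key_inv (r : ℚ) (a b : ℚ⟦X⟧) (ha0 : PowerSeries.constantCoeff a = 1)
    (hb0 : PowerSeries.constantCoeff b = 1)
    (ha : a ^ 2 = 1 - PowerSeries.C r * PowerSeries.X ^ 2)
    (hb : b ^ 2 = 1 + PowerSeries.C r * PowerSeries.X ^ 2) :
    comp a⁻¹ (PowerSeries.X * b⁻¹) = b := by
  set g : ℚ⟦X⟧ := PowerSeries.X * b⁻¹ with hgdef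
  have hane : PowerSeries.constantCoeff a ≠ 0 := by rw [ha0]; norm_num
  have hbne : PowerSeries.constantCoeff b ≠ 0 := by rw [hb0]; norm_num
  have hbu : b * b⁻¹ = 1 := PowerSeries.mul_inv_cancel b hbne
  have hau : a * a⁻¹ = 1 := PowerSeries.mul_inv_cancel a hane
  have hg : PowerSeries.constantCoeff g = 0 := by
    rw [hgdef, map_mul, PowerSeries.constantCoeff_X, zero_mul]
  have h1 : comp a g * comp a⁻¹ g = 1 := by
    rw [← comp_mul hg, hau, comp_one]
  rw [key r a b ha0 hb0 ha hb] at h1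
  calc comp a⁻¹ g = (b * b⁻¹) * comp a⁻¹ g := by rw [hbu, one_mul]
    _ = b * (b⁻¹ * comp a⁻¹ g) := by ring
    _ = b := by rw [h1, mul_one]

lemma key_cube (r : ℚ) (a b : ℚ⟦X⟧) (ha0 : PowerSeries.constantCoeff a = 1)
    (hb0 : PowerSeries.constantCoeff b = 1)
    (ha : a ^ 2 = 1 - PowerSeries.C r * PowerSeries.X ^ 2)
    (hb : b ^ 2 = 1 + PowerSeries.C r * PowerSeries.X ^ 2) :
    comp ((a ^ 3)⁻¹) (PowerSeries.X * b⁻¹) = b ^ 3 := by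
  set g : ℚ⟦X⟧ := PowerSeries.X * b⁻¹ with hgdef
  have hane : PowerSeries.constantCoeff (a ^ 3) ≠ 0 := by
    rw [map_pow, ha0]; norm_num
  have hbne : PowerSeries.constantCoeff b ≠ 0 := by rw [hb0]; norm_num
  have hbu : b * b⁻¹ = 1 := PowerSeries.mul_inv_cancel b hbne
  have hau : a ^ 3 * (a ^ 3)⁻¹ = 1 := PowerSeries.mul_inv_cancel _ hane
  have hg : PowerSeries.constantCoeff g = 0 := by
    rw [hgdef, map_mul, PowerSeries.constantCoeff_X, zero_mul]
  have h1 : comp (a ^ 3) g * comp ((a ^ 3)⁻¹) g = 1 := by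
    rw [← comp_mul hg, hau, comp_one]
  rw [comp_pow hg 3, key r a b ha0 hb0 ha hb] at h1
  have hbu3 : b ^ 3 * (b⁻¹) ^ 3 = 1 := by rw [← mul_pow, hbu, one_pow]
  calc comp ((a ^ 3)⁻¹) g = (b ^ 3 * (b⁻¹) ^ 3) * comp ((a ^ 3)⁻¹) g := by
        rw [hbu3, one_mul]
    _ = b ^ 3 * ((b⁻¹) ^ 3 * comp ((a ^ 3)⁻¹) g) := by ring
    _ = b ^ 3 := by rw [h1, mul_one]

lemma key_X (r : ℚ) (a b : ℚ⟦X⟧) (ha0 : PowerSeries.constantCoeff a = 1)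
    (hb0 : PowerSeries.constantCoeff b = 1)
    (ha : a ^ 2 = 1 - PowerSeries.C r * PowerSeries.X ^ 2)
    (hb : b ^ 2 = 1 + PowerSeries.C r * PowerSeries.X ^ 2) :
    comp (PowerSeries.X * a⁻¹) (PowerSeries.X * b⁻¹) = PowerSeries.X := by
  have hbne : PowerSeries.constantCoeff b ≠ 0 := by rw [hb0]; norm_num
  have hbu : b * b⁻¹ = 1 := PowerSeries.mul_inv_cancel b hbne
  have hg : PowerSeries.constantCoeff (PowerSeries.X * b⁻¹ : ℚ⟦X⟧) = 0 := by
    rw [map_mul, PowerSeries.constantCoeff_X, zero_mul]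
  rw [comp_mul hg, comp_X hg, key_inv r a b ha0 hb0 ha hb]
  calc PowerSeries.X * b⁻¹ * b = PowerSeries.X * (b * b⁻¹) := by ring
    _ = PowerSeries.X := by rw [hbu, mul_one]

end QI

/-- (1/(1-4x^2)^{3/2}, x/√(1-4x^2)) is a quasi-involution: its inverse is
(1/(1+4x^2)^{3/2}, x/√(1+4x^2)); equivalently, the compositional inverse of
x/√(1-4x^2) is x/√(1+4x^2). -/
theorem quasi_involution_three_halves (s t : ℚ⟦X⟧)
    (hs0 : PowerSeries.constantCoeff s = 1) (hs : s ^ 2 = 1 - 4 * X ^ 2)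
    (ht0 : PowerSeries.constantCoeff t = 1) (ht : t ^ 2 = 1 + 4 * X ^ 2) :
    rmul (((s ^ 3 : ℚ⟦X⟧)⁻¹, X * s⁻¹)) (((t ^ 3)⁻¹, X * t⁻¹)) = (1, X) ∧
    rmul (((t ^ 3 : ℚ⟦X⟧)⁻¹, X * t⁻¹)) (((s ^ 3)⁻¹, X * s⁻¹)) = (1, X) ∧
    comp (X * s⁻¹) (X * t⁻¹) = X ∧ comp (X * t⁻¹) (X * s⁻¹) = X := by
  have hC4 : (PowerSeries.C) (4:ℚ) = (4:ℚ⟦X⟧) := by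
    exact map_ofNat (PowerSeries.C) 4
  have hs' : s ^ 2 = 1 - PowerSeries.C (4:ℚ) * X ^ 2 := by rw [hC4]; exact hs
  have ht' : t ^ 2 = 1 + PowerSeries.C (4:ℚ) * X ^ 2 := by rw [hC4]; exact ht
  have ht'' : t ^ 2 = 1 - PowerSeries.C (-4:ℚ) * X ^ 2 := by
    rw [map_neg, hC4, ht]; ring
  have hs'' : s ^ 2 = 1 + PowerSeries.C (-4:ℚ) * X ^ 2 := by
    rw [map_neg, hC4, hs]; ring
  have c1 : comp (X * s⁻¹) (X * t⁻¹) = X := QI.key_X 4 s t hs0 ht0 hs' ht'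
  have c2 : comp (X * t⁻¹) (X * s⁻¹) = X := QI.key_X (-4) t s ht0 hs0 ht'' hs''
  have d1 : comp ((t ^ 3)⁻¹) (X * s⁻¹) = s ^ 3 := QI.key_cube (-4) t s ht0 hs0 ht'' hs''
  have d2 : comp ((s ^ 3)⁻¹) (X * t⁻¹) = t ^ 3 := QI.key_cube 4 s t hs0 ht0 hs' ht'
  have hs3 : (s ^ 3 : ℚ⟦X⟧)⁻¹ * s ^ 3 = 1 := by
    rw [mul_comm]
    exact PowerSeries.mul_inv_cancel _ (by rw [map_pow, hs0]; norm_num)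
  have ht3 : (t ^ 3 : ℚ⟦X⟧)⁻¹ * t ^ 3 = 1 := by
    rw [mul_comm]
    exact PowerSeries.mul_inv_cancel _ (by rw [map_pow, ht0]; norm_num)
  refine ⟨?_, ?_, c1, c2⟩
  · show ((s ^ 3)⁻¹ * comp ((t ^ 3)⁻¹) (X * s⁻¹), comp (X * t⁻¹) (X * s⁻¹)) = (1, X)
    rw [d1, c2, hs3]
  · show ((t ^ 3)⁻¹ * comp ((s ^ 3)⁻¹) (X * t⁻¹), comp (X * s⁻¹) (X * t⁻¹)) = (1, X)
    rw [d2, c1, ht3]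
end
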